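/- Let P, ξ, α, C₁, t be positive real numbers satisfying C₁·P·ξ·t^{α+1} ≥ 2(α+1). Then there exists a real number r ≥ 0 (namely r = ξ·ln( C₁·P·ξ·t^{α+1} / (2(α+1)) )) such that 2·P·r + (C₁·P²·t^{α+1}/(α+1))·(ξ·r + ξ²)·e^{−r/ξ} ≤ 4·P·ξ·[ (α+1)·ln t + ln(P·ξ) + ln( C₁·√e / (2(α+1)) ) ]. -/

import Mathlib

/-- **Final optimization step in the proof of Theorem 1**: substituting the leading term
`r = ξ·ln(C₁·P·ξ·t^{α+1}/(2(α+1)))` of the Lambert `W₋₁` branch into the bound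
`2Pr + (C₁P²t^{α+1}/(α+1))(ξr + ξ²)e^{−r/ξ}` yields the logarithmic-in-time entanglement
growth bound `4Pξ[(α+1)·ln t + ln(Pξ) + ln(C₁√e/(2(α+1)))]`. -/
theorem entanglement_bound_optimization (P ξ α C₁ t : ℝ)
    (hP : 0 < P) (hξ : 0 < ξ) (hα : 0 < α) (hC₁ : 0 < C₁) (ht : 0 < t)
    (hbig : 2 * (α + 1) ≤ C₁ * P * ξ * t ^ (α + 1)) :
    ∃ r : ℝ, r = ξ * Real.log (C₁ * P * ξ * t ^ (α + 1) / (2 * (α + 1))) ∧ 0 ≤ r ∧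
      2 * P * r + C₁ * P ^ 2 * t ^ (α + 1) / (α + 1) * (ξ * r + ξ ^ 2) * Real.exp (-r / ξ)
        ≤ 4 * P * ξ *
          ((α + 1) * Real.log t + Real.log (P * ξ) +
            Real.log (C₁ * Real.sqrt (Real.exp 1) / (2 * (α + 1)))) := by
  have hα1 : (0:ℝ) < α + 1 := by linarith
  have h2α : (0:ℝ) < 2 * (α + 1) := by linarith
  set A : ℝ := C₁ * P * ξ * t ^ (α + 1) / (2 * (α + 1)) with hA
  have htp : (0:ℝ) < t ^ (α + 1) := Real.rpow_pos_of_pos ht _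
  have hApos : 0 < A := by positivity
  have hA1 : 1 ≤ A := (one_le_div h2α).mpr hbig
  have hLA : 0 ≤ Real.log A := Real.log_nonneg hA1
  refine ⟨ξ * Real.log A, rfl, by positivity, ?_⟩
  have hexp : Real.exp (-(ξ * Real.log A) / ξ) = A⁻¹ := by
    have : -(ξ * Real.log A) / ξ = -Real.log A := by field_simp
    rw [this, Real.exp_neg, Real.exp_log hApos]
  rw [hexp]
  -- LHS simplifies to 4 P ξ log A + 2 P ξ
  have hCform : C₁ * P ^ 2 * t ^ (α + 1) / (α + 1) = 2 * P * A / ξ := by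
    rw [hA]; field_simp
  have hLHS : 2 * P * (ξ * Real.log A) +
      C₁ * P ^ 2 * t ^ (α + 1) / (α + 1) * (ξ * (ξ * Real.log A) + ξ ^ 2) * A⁻¹
      = 4 * P * ξ * (Real.log A + 1/2) := by
    rw [hCform]
    field_simp
    ring
  rw [hLHS]
  -- RHS equals the same
  have hsqrt : Real.log (Real.sqrt (Real.exp 1)) = 1/2 := by
    rw [Real.log_sqrt (Real.exp_pos 1).le, Real.log_exp]
  have h1 : Real.log A = Real.log C₁ + Real.log P + Real.log ξ + (α + 1) * Real.log t
      - Real.log (2 * (α + 1)) := by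
    rw [hA, Real.log_div (by positivity) h2α.ne',
      Real.log_mul (by positivity) htp.ne',
      Real.log_mul (by positivity) hξ.ne',
      Real.log_mul hC₁.ne' hP.ne',
      Real.log_rpow ht]
  have h2 : Real.log (C₁ * Real.sqrt (Real.exp 1) / (2 * (α + 1)))
      = Real.log C₁ + 1/2 - Real.log (2 * (α + 1)) := by
    rw [Real.log_div (by positivity) h2α.ne',
      Real.log_mul hC₁.ne' (Real.sqrt_pos.mpr (Real.exp_pos 1)).ne', hsqrt]
  have h3 : Real.log (P * ξ) = Real.log P + Real.log ξ := Real.log_mul hP.ne' hξ.ne'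
  rw [h2, h3, h1]
  ring_nf
  linarith [le_refl (0:ℝ)]
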